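/- Suppose the probability space Ω is finite. For every x ∈ ℝ and N ∈ 𝒩 the after-tax terminal wealth under the limited-use-of-losses rule equals the minimum over all artificial linear tax rules: V^α(x,N) = min_τ η^{(τ)}_T(N), where the minimum is taken over the finite set of all tax rules τ as defined in the context. -/

import Mathlib

open MeasureTheory Filter Finset

noncomputable section
open scoped Classical

/-- Euclidean inner product on `Fin d → ℝ`. -/
def dotp {d : ℕ} (a b : Fin d → ℝ) : ℝ := ∑ j, a j * b j

/-- Euclidean norm on `Fin d → ℝ`. -/
def eucNorm {d : ℕ} (a : Fin d → ℝ) : ℝ := Real.sqrt (∑ j, a j ^ 2)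

/-- Accumulated realized gains and losses `G_t`, given the bank account history `eta`:
`G_t = ∑_{u=1}^t ( η_{u-1} r_u + ∑_{i=0}^{u-1} ⟨N_{i,u-1} - N_{i,u}, S_u - S_i⟩ )`. -/
def Gaux {d : ℕ} (S : ℕ → Fin d → ℝ) (r : ℕ → ℝ) (N : ℕ → ℕ → Fin d → ℝ)
    (eta : ℕ → ℝ) (t : ℕ) : ℝ :=
  ∑ u ∈ Finset.Icc 1 t,
    (eta (u - 1) * r u +
      ∑ i ∈ Finset.range u, dotp (fun j => N i (u - 1) j - N i u j) (fun j => S u j - S i j))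

/-- Limited-use-of-losses tax payments `Π_t = α · max_{0 ≤ u ≤ t} G_u`. -/
def Piaux {d : ℕ} (α : ℝ) (S : ℕ → Fin d → ℝ) (r : ℕ → ℝ) (N : ℕ → ℕ → Fin d → ℝ)
    (eta : ℕ → ℝ) (t : ℕ) : ℝ :=
  α * (Finset.range (t + 1)).sup' ⟨0, Finset.mem_range.mpr (Nat.succ_pos t)⟩ (fun u => Gaux S r N eta u)

/-- `etaHist α x S r N t` is the bank-account history after trading and taxes, up to time `t`:
for `s ≤ t` it gives `η_s`, and for `s > t` it gives `η_t`.  It is defined by the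
self-financing recursion `η_{-1} = x`,
`η_t - η_{t-1} = r_t η_{t-1} 1_{t ≥ 1} + ⟨∑_{i<t}(N_{i,t-1} - N_{i,t}) - N_{t,t}, S_t⟩
  - (Π_t - Π_{t-1}) 1_{t ≥ 1}`. -/
def etaHist {d : ℕ} (α x : ℝ) (S : ℕ → Fin d → ℝ) (r : ℕ → ℝ)
    (N : ℕ → ℕ → Fin d → ℝ) : ℕ → ℕ → ℝ :=
  Nat.rec (motive := fun _ => ℕ → ℝ)
    (fun _ => x - dotp (fun j => N 0 0 j) (fun j => S 0 j))
    (fun t e => fun s =>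
      if s ≤ t then e s
      else
        e t + r (t + 1) * e t
          + dotp
              (fun j => (∑ i ∈ Finset.range (t + 1), (N i t j - N i (t + 1) j))
                - N (t + 1) (t + 1) j)
              (fun j => S (t + 1) j)
          - (Piaux α S r N e (t + 1) - Piaux α S r N e t))

/-- A discrete-time market with horizon `T`, `d` risky assets, a filtration `F`,
adapted nonnegative-price processes are not required in general, and a nonnegative adapted
interest-rate process `r`. -/
structure Market (Ω : Type*) [m0 : MeasurableSpace Ω] (T d : ℕ) where
  P : Measure Ω
  hProb : IsProbabilityMeasure P
  F : ℕ → MeasurableSpace Ω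
  F_le : ∀ t, F t ≤ m0
  F_mono : Monotone F
  S : ℕ → Ω → Fin d → ℝ
  S_adapted : ∀ t, Measurable[F t] (S t)
  r : ℕ → Ω → ℝ
  r_nonneg : ∀ t ω, 0 ≤ r t ω
  r_adapted : ∀ t, Measurable[F t] (r t)

variable {Ω : Type*} [m0 : MeasurableSpace Ω] {T d : ℕ}

/-- A trading strategy: `N i t ω j` is the number of shares of asset `j` bought at time `i`
and still held after trading at time `t`.  It is `F t`-adapted, nonnegative, nonincreasing
in `t` (for `i ≤ t < T`), forced to liquidate at `T`, and zero before the purchase date. -/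
def Market.IsStrategy (M : Market Ω T d) (N : ℕ → ℕ → Ω → Fin d → ℝ) : Prop :=
  (∀ i t, Measurable[M.F t] (N i t)) ∧
  (∀ i t ω j, 0 ≤ N i t ω j) ∧
  (∀ i t, i ≤ t → t < T → ∀ ω j, N i (t + 1) ω j ≤ N i t ω j) ∧
  (∀ i ω j, N i T ω j = 0) ∧
  (∀ i t, t < i → ∀ ω j, N i t ω j = 0)

/-- After-tax terminal wealth `V^α(x,N) = η_T`. -/
def Market.V (M : Market Ω T d) (α x : ℝ) (N : ℕ → ℕ → Ω → Fin d → ℝ) (ω : Ω) : ℝ :=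
  etaHist α x (fun t => M.S t ω) (fun t => M.r t ω) (fun i t => N i t ω) T T

/-- The frictionless (tax-free) wealth process `V^0_t(x,N) = η_t + ⟨∑_{i≤t} N_{i,t}, S_t⟩`,
where `η` is the bank account for tax rate `0`. -/
def Market.V0proc (M : Market Ω T d) (x : ℝ) (N : ℕ → ℕ → Ω → Fin d → ℝ) (t : ℕ) (ω : Ω) : ℝ :=
  etaHist 0 x (fun u => M.S u ω) (fun u => M.r u ω) (fun i u => N i u ω) t t
    + dotp (fun j => ∑ i ∈ Finset.range (t + 1), N i t ω j) (fun j => M.S t ω j)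

/-- The no-arbitrage condition for tax rate `α`. -/
def Market.NA (M : Market Ω T d) (α : ℝ) : Prop :=
  ∀ N, M.IsStrategy N → (∀ᵐ ω ∂M.P, 0 ≤ M.V α 0 N ω) → ∀ᵐ ω ∂M.P, M.V α 0 N ω = 0

/-- The set `{V^α(x,N) : N ∈ 𝒩} - L^0(F_T; ℝ₊)` of attainable after-tax terminal wealths. -/
def Market.Vset (M : Market Ω T d) (α x : ℝ) : Set (Ω → ℝ) :=
  {f | ∃ N, M.IsStrategy N ∧
    ∃ g : Ω → ℝ, Measurable[M.F T] g ∧ (∀ ω, 0 ≤ g ω) ∧ f = fun ω => M.V α x N ω - g ω}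

/-- The frictionless wealth recursion
`V_t = (1+r_t) V_{t-1} + ⟨∑_{i<t} N_{i,t-1}, S_t - (1+r_t) S_{t-1}⟩`. -/
def wealth0 {d : ℕ} (S : ℕ → Fin d → ℝ) (r : ℕ → ℝ) (N : ℕ → ℕ → Fin d → ℝ) (x : ℝ) :
    ℕ → ℝ :=
  Nat.rec (motive := fun _ => ℝ) x (fun t W =>
    (1 + r (t + 1)) * W
      + dotp (fun j => ∑ i ∈ Finset.range (t + 1), N i t j)
          (fun j => S (t + 1) j - (1 + r (t + 1)) * S t j))

/-- Frictionless terminal wealth `V^0(x,N)`. -/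
def Market.V0 (M : Market Ω T d) (x : ℝ) (N : ℕ → ℕ → Ω → Fin d → ℝ) (ω : Ω) : ℝ :=
  wealth0 (fun t => M.S t ω) (fun t => M.r t ω) (fun i t => N i t ω) x T

/-- No-arbitrage for the frictionless model. -/
def Market.NA0 (M : Market Ω T d) : Prop :=
  ∀ N, M.IsStrategy N → (∀ᵐ ω ∂M.P, 0 ≤ M.V0 0 N ω) → ∀ᵐ ω ∂M.P, M.V0 0 N ω = 0

/-- The cone `ℛ_t` of reversible one-period strategies. -/
def Market.RevCone (M : Market Ω T d) (t : ℕ) : Set (Ω → Fin d → ℝ) :=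
  {β | Measurable[M.F t] β ∧ (∀ ω j, 0 ≤ β ω j) ∧
    ∀ᵐ ω ∂M.P, dotp (β ω) (fun j => M.S (t + 1) ω j - (1 + M.r (t + 1) ω) * M.S t ω j) = 0}

/-- `q` is the purely nonreversible part `q_t(β)` of `β`: it is `F_t`-measurable, nonnegative,
`β - q` is reversible, and `q` has minimal Euclidean norm among all such decompositions. -/
def Market.IsQ (M : Market Ω T d) (t : ℕ) (β q : Ω → Fin d → ℝ) : Prop :=
  Measurable[M.F t] q ∧ (∀ ω j, 0 ≤ q ω j) ∧
  (fun ω j => β ω j - q ω j) ∈ M.RevCone t ∧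
  ∀ q' : Ω → Fin d → ℝ, Measurable[M.F t] q' → (∀ ω j, 0 ≤ q' ω j) →
    (fun ω j => β ω j - q' ω j) ∈ M.RevCone t →
    ∀ᵐ ω ∂M.P, eucNorm (q ω) ≤ eucNorm (q' ω)

/-- `β` is purely nonreversible, i.e. `q_t(β) = β`. -/
def Market.PurelyNonRev (M : Market Ω T d) (t : ℕ) (β : Ω → Fin d → ℝ) : Prop :=
  M.IsQ t β β

/-- A reaction function: `R ω a i t` may depend on `ω` only through `F_t` and on the action
history `a` only through the actions up to time `t`; it is nonnegative, nonincreasing in `t`,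
vanishes at and after the horizon `T` and before the purchase date. -/
structure ReactionFun (M : Market Ω T d) where
  R : Ω → (ℕ → ℕ → Fin d → ℝ) → ℕ → ℕ → Fin d → ℝ
  nonneg : ∀ ω a i t j, 0 ≤ R ω a i t j
  adapted_actions : ∀ ω a a' i t, (∀ i' t', t' ≤ t → a i' t' = a' i' t') →
    R ω a i t = R ω a' i t
  meas : ∀ i t, Measurable[(M.F t).prod inferInstance]
    (fun p : Ω × (ℕ → ℕ → Fin d → ℝ) => R p.1 p.2 i t)
  antitone : ∀ ω a i t, i ≤ t → t + 2 ≤ T → ∀ j, R ω a i (t + 1) j ≤ R ω a i t j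
  upper : ∀ ω a i t, T ≤ t → ∀ j, R ω a i t j = 0
  lower : ∀ ω a i t, t < i → ∀ j, R ω a i t j = 0

/-- The strategy `R(N)` produced by a reaction function from a strategy `N`. -/
def ReactionFun.apply {M : Market Ω T d} (Rf : ReactionFun M)
    (N : ℕ → ℕ → Ω → Fin d → ℝ) : ℕ → ℕ → Ω → Fin d → ℝ :=
  fun i t ω => Rf.R ω (fun i' t' => N i' t' ω) i t

/-- `max_{i=0,…,T-1, j=1,…,d} N_{i,i,j}`. -/
def stratMax {Ω : Type*} {d : ℕ} (T : ℕ) (N : ℕ → ℕ → Ω → Fin d → ℝ) (ω : Ω) : ℝ :=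
  ⨆ i ∈ Finset.range T, ⨆ j : Fin d, N i i ω j

/-- A family of random variables is bounded in `L⁰` (bounded in probability). -/
def BoundedInL0 {Ω : Type*} [MeasurableSpace Ω] (P : Measure Ω) (𝒮 : Set (Ω → ℝ)) : Prop :=
  ∀ ε : ℝ, 0 < ε → ∃ C : ℝ, ∀ f ∈ 𝒮, P {ω | C < |f ω|} ≤ ENNReal.ofReal ε

/-- The "no unbounded non-substitutable investment with bounded risk" condition. -/
def Market.NUIBR (M : Market Ω T d) (α : ℝ) : Prop :=
  ∀ x : ℝ, ∃ Rf : ReactionFun M,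
    (∀ N, M.IsStrategy N → M.IsStrategy (Rf.apply N)) ∧
    (∀ N, M.IsStrategy N → ∀ᵐ ω ∂M.P, M.V α x N ω ≤ M.V α x (Rf.apply N) ω) ∧
    ∀ K : ℝ, 0 ≤ K →
      BoundedInL0 M.P (convexHull ℝ
        {f : Ω → ℝ | ∃ N, M.IsStrategy N ∧ (∀ᵐ ω ∂M.P, -K ≤ M.V α x N ω) ∧
          f = stratMax T (Rf.apply N)})

/-- A set of random variables is closed with respect to convergence in probability
(as a subset of `L⁰`, i.e. up to almost-sure equality). -/
def ClosedInProbability {Ω : Type*} [MeasurableSpace Ω] (P : Measure Ω)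
    (𝒮 : Set (Ω → ℝ)) : Prop :=
  ∀ (f : ℕ → Ω → ℝ) (g : Ω → ℝ), (∀ n, f n ∈ 𝒮) →
    TendstoInMeasure P f Filter.atTop g → ∃ g' ∈ 𝒮, g' =ᵐ[P] g


/-- Bank account process for an artificial linear tax rule `τ`:
taxes `Π^{(τ)}_t = α · G_{τ_t}` are paid according to the rule `τ` (with `τ 0 = 0`,
so that `Π^{(τ)}_0 = 0`).  `etaTau α x S r N τ t s` gives `η^{(τ)}_s` for `s ≤ t`. -/
def etaTau {d : ℕ} (α x : ℝ) (S : ℕ → Fin d → ℝ) (r : ℕ → ℝ)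
    (N : ℕ → ℕ → Fin d → ℝ) (τ : ℕ → ℕ) : ℕ → ℕ → ℝ :=
  Nat.rec (motive := fun _ => ℕ → ℝ)
    (fun _ => x - dotp (fun j => N 0 0 j) (fun j => S 0 j))
    (fun t e => fun s =>
      if s ≤ t then e s
      else
        e t + r (t + 1) * e t
          + dotp
              (fun j => (∑ i ∈ Finset.range (t + 1), (N i t j - N i (t + 1) j))
                - N (t + 1) (t + 1) j)
              (fun j => S (t + 1) j)
          - (α * Gaux S r N e (τ (t + 1)) - α * Gaux S r N e (τ t)))

variable {Ω : Type*} [m0 : MeasurableSpace Ω] {T d : ℕ}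

/-- An artificial linear tax rule: an adapted `{0,…,T}`-valued process `τ` with `τ_0 = 0`,
`τ` nondecreasing in `t`, `τ_t ≤ t`, and `τ_{τ_t} = τ_t` whenever `τ_t ≥ 1`. -/
def Market.IsTaxRule (M : Market Ω T d) (τ : ℕ → Ω → ℕ) : Prop :=
  (∀ ω, τ 0 ω = 0) ∧
  (∀ t, Measurable[M.F t] (τ t)) ∧
  (∀ t ω, τ t ω ≤ t) ∧
  (∀ t ω, τ t ω ≤ T) ∧
  (∀ s t, s ≤ t → ∀ ω, τ s ω ≤ τ t ω) ∧
  (∀ t ω, 1 ≤ τ t ω → τ (τ t ω) ω = τ t ω)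

/-- Terminal bank account `η^{(τ)}_T(N)` under the artificial tax rule `τ`. -/
def Market.etaTauT (M : Market Ω T d) (α x : ℝ) (N : ℕ → ℕ → Ω → Fin d → ℝ)
    (τ : ℕ → Ω → ℕ) (ω : Ω) : ℝ :=
  etaTau α x (fun t => M.S t ω) (fun t => M.r t ω) (fun i t => N i t ω) (fun t => τ t ω) T T

/-- A strategy realizes losses: it does not keep shares that trade below their purchase
price. -/
def Market.RealizesLosses (M : Market Ω T d) (N : ℕ → ℕ → Ω → Fin d → ℝ) : Prop :=
  ∀ i t j, i < t → t ≤ T → ∀ᵐ ω ∂M.P, M.S t ω j < M.S i ω j → N i t ω j = 0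

/-- The loss bound `L_t(N) = ((−x) ∨ 0 + ∑_{s<t} ⟨q_s(∑_{i≤s} N_{i,s}), S_s⟩)(1+r̄)^T`,
expressed through a given family `q s` of purely nonreversible parts. -/
def Lfun {Ω : Type*} {d : ℕ} (x rbar : ℝ) (T : ℕ) (S : ℕ → Ω → Fin d → ℝ)
    (q : ℕ → Ω → Fin d → ℝ) (t : ℕ) (ω : Ω) : ℝ :=
  (max (-x) 0 + ∑ s ∈ Finset.range t, dotp (q s ω) (fun j => S s ω j)) * (1 + rbar) ^ T

/-- A stopping time of the filtration `F`. -/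
def IsStoppingTimeFun {Ω : Type*} (F : ℕ → MeasurableSpace Ω) (τ : Ω → ℕ) : Prop :=
  ∀ t : ℕ, MeasurableSet[F t] {ω | τ ω ≤ t}

/-- The family of random variables over which the essential infimum defining `ε_t` is
taken. -/
def Market.epsFamily (M : Market Ω T d) (t : ℕ) : Set (Ω → ENNReal) :=
  {g | ∃ (ε : Ω → ℝ) (A : Set Ω) (N : ℕ → ℕ → Ω → Fin d → ℝ),
    Measurable[M.F t] ε ∧ (∀ ω, ε ω ∈ Set.Icc (0:ℝ) 1) ∧
    MeasurableSet[M.F t] A ∧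
    M.IsStrategy N ∧ (∀ i, i < t → ∀ ω j, N i i ω j = 0) ∧
    M.PurelyNonRev t (fun ω => N t t ω) ∧
    (∀ᵐ ω ∂M.P, eucNorm (N t t ω) = Set.indicator A (fun _ => (1:ℝ)) ω) ∧
    (∀ᵐ ω ∂M.P,
      (M.P[Set.indicator {ω' | M.V0 0 N ω' ≤ - ε ω'} (fun _ => (1:ℝ)) | M.F t]) ω ≤ ε ω) ∧
    g = fun ω => if ω ∈ A then ENNReal.ofReal (ε ω) else (⊤ : ENNReal)}

/-- `e` is the essential infimum of the family `𝒮` of `[0,∞]`-valued random variables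
(with respect to `P`, measurable with respect to `m'`). -/
def IsEssInfOfSet {Ω : Type*} [MeasurableSpace Ω] (m' : MeasurableSpace Ω) (P : Measure Ω)
    (𝒮 : Set (Ω → ENNReal)) (e : Ω → ENNReal) : Prop :=
  Measurable[m'] e ∧ (∀ g ∈ 𝒮, ∀ᵐ ω ∂P, e ω ≤ g ω) ∧
  ∀ e' : Ω → ENNReal, Measurable[m'] e' → (∀ g ∈ 𝒮, ∀ᵐ ω ∂P, e' ω ≤ g ω) →
    ∀ᵐ ω ∂P, e' ω ≤ e ω

/-- The positive part of an extended-real number, as an element of `[0,∞]`. -/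
def erealPos (y : EReal) : ENNReal := if y = ⊤ then ⊤ else ENNReal.ofReal y.toReal

/-- A utility function: `U = -∞` on the negative half-line, real-valued, nondecreasing and
concave on the positive half-line (with real restriction `u`), and continuous from the
right at `0`. -/
structure UtilityFun where
  U : ℝ → EReal
  u : ℝ → ℝ
  neg_bot : ∀ y : ℝ, y < 0 → U y = ⊥
  pos_real : ∀ y : ℝ, 0 < y → U y = (u y : EReal)
  mono : MonotoneOn u (Set.Ioi (0:ℝ))
  concave : ConcaveOn ℝ (Set.Ioi (0:ℝ)) u
  zero_lim : Filter.Tendsto U (nhdsWithin 0 (Set.Ioi (0:ℝ))) (nhds (U 0))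

/-- Expected utility `E[U(X)] = E[U⁺(X)] - E[U⁻(X)]`, with the convention that it equals
`-∞` whenever `E[U⁻(X)] = ∞`. -/
def expUtility {Ω : Type*} [MeasurableSpace Ω] (P : Measure Ω) (Uf : UtilityFun)
    (X : Ω → ℝ) : EReal :=
  if (∫⁻ ω, erealPos (-(Uf.U (X ω))) ∂P) = ⊤ then ⊥
  else ((∫⁻ ω, erealPos (Uf.U (X ω)) ∂P : ENNReal) : EReal)
    - ((∫⁻ ω, erealPos (-(Uf.U (X ω))) ∂P : ENNReal) : EReal)

/-- The value function `u^α(x) = sup_{N ∈ 𝒜^α(x)} E[U(V^α(x,N))]` of the utility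
maximization problem with taxes. -/
def Market.valueFn (M : Market Ω T d) (Uf : UtilityFun) (α x : ℝ) : EReal :=
  ⨆ N ∈ {N : ℕ → ℕ → Ω → Fin d → ℝ |
      M.IsStrategy N ∧ ∀ᵐ ω ∂M.P, 0 ≤ M.V α x N ω},
    expUtility M.P Uf (fun ω => M.V α x N ω)

/-- The value function `u^0(x)` of the frictionless utility maximization problem. -/
def Market.valueFn0 (M : Market Ω T d) (Uf : UtilityFun) (x : ℝ) : EReal :=
  ⨆ N ∈ {N : ℕ → ℕ → Ω → Fin d → ℝ |
      M.IsStrategy N ∧ ∀ᵐ ω ∂M.P, 0 ≤ M.V0 x N ω},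
    expUtility M.P Uf (fun ω => M.V0 x N ω)

/-- The set `{V^α(x,N) : N ∈ 𝒜^α(x)} - L^0(F_T; ℝ₊)`. -/
def Market.VsetNonneg (M : Market Ω T d) (α x : ℝ) : Set (Ω → ℝ) :=
  {f | ∃ N, M.IsStrategy N ∧ (∀ᵐ ω ∂M.P, 0 ≤ M.V α x N ω) ∧
    ∃ g : Ω → ℝ, Measurable[M.F T] g ∧ (∀ ω, 0 ≤ g ω) ∧ f = fun ω => M.V α x N ω - g ω}

/-- The set `{V^0(x,N) : N ∈ 𝒩} - L^0(F_T; ℝ₊)` for the frictionless model. -/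
def Market.V0set (M : Market Ω T d) (x : ℝ) : Set (Ω → ℝ) :=
  {f | ∃ N, M.IsStrategy N ∧
    ∃ g : Ω → ℝ, Measurable[M.F T] g ∧ (∀ ω, 0 ≤ g ω) ∧ f = fun ω => M.V0 x N ω - g ω}

/-- A measurable (set-valued) random set: preimages of open sets are measurable. -/
def MeasRandomSet {Ω : Type*} (m : MeasurableSpace Ω) {d : ℕ}
    (K : Ω → Set (Fin d → ℝ)) : Prop :=
  ∀ O : Set (Fin d → ℝ), IsOpen O → MeasurableSet[m] {ω | (K ω ∩ O).Nonempty}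

/-- The random set `A_t = {β ∈ 𝒫_t : 1 + r_{t+1} + ⟨β, S_{t+1} - (1+r_{t+1})S_t⟩ ≥ 0 a.s.}`. -/
def Market.AtSet (M : Market Ω T d) (t : ℕ) : Set (Ω → Fin d → ℝ) :=
  {β | M.PurelyNonRev t β ∧
    ∀ᵐ ω ∂M.P, 0 ≤ 1 + M.r (t + 1) ω
      + dotp (β ω) (fun j => M.S (t + 1) ω j - (1 + M.r (t + 1) ω) * M.S t ω j)}

/-! ### Auxiliary development for Statement 5 -/

section TaxAux

variable {d : ℕ}

private lemma etaHist_succ (α x : ℝ) (S : ℕ → Fin d → ℝ) (r : ℕ → ℝ)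
    (N : ℕ → ℕ → Fin d → ℝ) (t s : ℕ) :
    etaHist α x S r N (t + 1) s =
      if s ≤ t then etaHist α x S r N t s
      else
        etaHist α x S r N t t + r (t + 1) * etaHist α x S r N t t
          + dotp
              (fun j => (∑ i ∈ Finset.range (t + 1), (N i t j - N i (t + 1) j))
                - N (t + 1) (t + 1) j)
              (fun j => S (t + 1) j)
          - (Piaux α S r N (etaHist α x S r N t) (t + 1)
              - Piaux α S r N (etaHist α x S r N t) t) := rfl

private lemma etaTau_succ (α x : ℝ) (S : ℕ → Fin d → ℝ) (r : ℕ → ℝ)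
    (N : ℕ → ℕ → Fin d → ℝ) (τ : ℕ → ℕ) (t s : ℕ) :
    etaTau α x S r N τ (t + 1) s =
      if s ≤ t then etaTau α x S r N τ t s
      else
        etaTau α x S r N τ t t + r (t + 1) * etaTau α x S r N τ t t
          + dotp
              (fun j => (∑ i ∈ Finset.range (t + 1), (N i t j - N i (t + 1) j))
                - N (t + 1) (t + 1) j)
              (fun j => S (t + 1) j)
          - (α * Gaux S r N (etaTau α x S r N τ t) (τ (t + 1))
              - α * Gaux S r N (etaTau α x S r N τ t) (τ t)) := rfl

private lemma etaHist_stage (α x : ℝ) (S : ℕ → Fin d → ℝ) (r : ℕ → ℝ)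
    (N : ℕ → ℕ → Fin d → ℝ) :
    ∀ t s, s ≤ t → etaHist α x S r N t s = etaHist α x S r N s s := by
  intro t
  induction t with
  | zero => intro s hs; rw [Nat.le_zero.mp hs]
  | succ t ih =>
    intro s hs
    rcases le_or_gt s t with h | h
    · rw [etaHist_succ, if_pos h, ih s h]
    · have : s = t + 1 := by omega
      subst this; rfl

private lemma etaTau_stage (α x : ℝ) (S : ℕ → Fin d → ℝ) (r : ℕ → ℝ)
    (N : ℕ → ℕ → Fin d → ℝ) (τ : ℕ → ℕ) :
    ∀ t s, s ≤ t → etaTau α x S r N τ t s = etaTau α x S r N τ s s := by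
  intro t
  induction t with
  | zero => intro s hs; rw [Nat.le_zero.mp hs]
  | succ t ih =>
    intro s hs
    rcases le_or_gt s t with h | h
    · rw [etaTau_succ, if_pos h, ih s h]
    · have : s = t + 1 := by omega
      subst this; rfl

/-- The bank account process under the limited-use-of-losses rule. -/
private def EH (α x : ℝ) (S : ℕ → Fin d → ℝ) (r : ℕ → ℝ) (N : ℕ → ℕ → Fin d → ℝ)
    (t : ℕ) : ℝ := etaHist α x S r N t t

/-- The realized-gains process of `EH`. -/
private def GH (α x : ℝ) (S : ℕ → Fin d → ℝ) (r : ℕ → ℝ) (N : ℕ → ℕ → Fin d → ℝ)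
    (u : ℕ) : ℝ := Gaux S r N (EH α x S r N) u

/-- Running maximum of `GH`. -/
private def MH (α x : ℝ) (S : ℕ → Fin d → ℝ) (r : ℕ → ℝ) (N : ℕ → ℕ → Fin d → ℝ)
    (t : ℕ) : ℝ :=
  (Finset.range (t + 1)).sup' Finset.nonempty_range_add_one (GH α x S r N)

/-- The bank account process under the tax rule `τ`. -/
private def ETa (α x : ℝ) (S : ℕ → Fin d → ℝ) (r : ℕ → ℝ) (N : ℕ → ℕ → Fin d → ℝ)
    (τ : ℕ → ℕ) (t : ℕ) : ℝ := etaTau α x S r N τ t t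

/-- The realized-gains process of `ETa`. -/
private def GTa (α x : ℝ) (S : ℕ → Fin d → ℝ) (r : ℕ → ℝ) (N : ℕ → ℕ → Fin d → ℝ)
    (τ : ℕ → ℕ) (u : ℕ) : ℝ := Gaux S r N (ETa α x S r N τ) u

private lemma Gaux_congr (S : ℕ → Fin d → ℝ) (r : ℕ → ℝ) (N : ℕ → ℕ → Fin d → ℝ)
    {e e' : ℕ → ℝ} (u : ℕ) (h : ∀ v, v < u → e v = e' v) :
    Gaux S r N e u = Gaux S r N e' u := by
  unfold Gaux
  refine Finset.sum_congr rfl fun v hv => ?_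
  rw [Finset.mem_Icc] at hv
  rw [h (v - 1) (by omega)]

private lemma Gaux_sub (S : ℕ → Fin d → ℝ) (r : ℕ → ℝ) (N : ℕ → ℕ → Fin d → ℝ)
    (e e' : ℕ → ℝ) (u : ℕ) :
    Gaux S r N e u - Gaux S r N e' u
      = ∑ v ∈ Finset.Icc 1 u, (e (v - 1) - e' (v - 1)) * r v := by
  unfold Gaux
  rw [← Finset.sum_sub_distrib]
  exact Finset.sum_congr rfl fun v hv => by ring

private lemma Gaux_zero (S : ℕ → Fin d → ℝ) (r : ℕ → ℝ) (N : ℕ → ℕ → Fin d → ℝ)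
    (e : ℕ → ℝ) : Gaux S r N e 0 = 0 := by
  unfold Gaux
  rw [Finset.Icc_eq_empty (by omega), Finset.sum_empty]

private lemma MH_zero (α x : ℝ) (S : ℕ → Fin d → ℝ) (r : ℕ → ℝ)
    (N : ℕ → ℕ → Fin d → ℝ) : MH α x S r N 0 = 0 := by
  unfold MH
  have h0 : GH α x S r N 0 = 0 := Gaux_zero S r N _
  apply le_antisymm
  · apply Finset.sup'_le
    intro v hv
    rw [Finset.mem_range] at hv
    have : v = 0 := by omega
    subst this; rw [h0]
  · rw [← h0]
    exact Finset.le_sup' _ (Finset.mem_range.mpr (by omega))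

private lemma MH_mono (α x : ℝ) (S : ℕ → Fin d → ℝ) (r : ℕ → ℝ)
    (N : ℕ → ℕ → Fin d → ℝ) {s t : ℕ} (hst : s ≤ t) :
    MH α x S r N s ≤ MH α x S r N t := by
  apply Finset.sup'_le
  intro u hu
  rw [Finset.mem_range] at hu
  exact Finset.le_sup' _ (Finset.mem_range.mpr (by omega))

private lemma EH_succ (α x : ℝ) (S : ℕ → Fin d → ℝ) (r : ℕ → ℝ)
    (N : ℕ → ℕ → Fin d → ℝ) (t : ℕ) :
    EH α x S r N (t + 1) = EH α x S r N t + r (t + 1) * EH α x S r N t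
      + dotp
          (fun j => (∑ i ∈ Finset.range (t + 1), (N i t j - N i (t + 1) j))
            - N (t + 1) (t + 1) j)
          (fun j => S (t + 1) j)
      - (α * MH α x S r N (t + 1) - α * MH α x S r N t) := by
  have hG : ∀ u, u ≤ t + 1 → Gaux S r N (etaHist α x S r N t) u = GH α x S r N u := by
    intro u hu
    exact Gaux_congr S r N u fun v hv => etaHist_stage α x S r N t v (by omega)
  have hP : ∀ u, u ≤ t + 1 →
      Piaux α S r N (etaHist α x S r N t) u = α * MH α x S r N u := by
    intro u hu
    unfold Piaux MH
    congr 1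
    refine Finset.sup'_congr _ rfl fun v hv => ?_
    rw [Finset.mem_range] at hv
    exact hG v (by omega)
  show etaHist α x S r N (t + 1) (t + 1) = _
  rw [etaHist_succ, if_neg (by omega), hP (t + 1) le_rfl, hP t (by omega)]
  rfl

private lemma ETa_succ (α x : ℝ) (S : ℕ → Fin d → ℝ) (r : ℕ → ℝ)
    (N : ℕ → ℕ → Fin d → ℝ) (τ : ℕ → ℕ) (t : ℕ)
    (h1 : τ (t + 1) ≤ t + 1) (h2 : τ t ≤ t) :
    ETa α x S r N τ (t + 1) = ETa α x S r N τ t + r (t + 1) * ETa α x S r N τ t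
      + dotp
          (fun j => (∑ i ∈ Finset.range (t + 1), (N i t j - N i (t + 1) j))
            - N (t + 1) (t + 1) j)
          (fun j => S (t + 1) j)
      - (α * GTa α x S r N τ (τ (t + 1)) - α * GTa α x S r N τ (τ t)) := by
  have hG : ∀ u, u ≤ t + 1 →
      Gaux S r N (etaTau α x S r N τ t) u = GTa α x S r N τ u := by
    intro u hu
    exact Gaux_congr S r N u fun v hv => etaTau_stage α x S r N τ t v (by omega)
  show etaTau α x S r N τ (t + 1) (t + 1) = _
  rw [etaTau_succ, if_neg (by omega), hG (τ (t + 1)) h1, hG (τ t) (by omega)]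
  rfl

private lemma key_ineq (α x : ℝ) (S : ℕ → Fin d → ℝ) (r : ℕ → ℝ)
    (N : ℕ → ℕ → Fin d → ℝ) (hα0 : 0 ≤ α) (hα1 : α ≤ 1) (hr : ∀ t, 0 ≤ r t)
    (τ : ℕ → ℕ) (hτ0 : τ 0 = 0) (hτle : ∀ t, τ t ≤ t) :
    ∀ t, (ETa α x S r N τ t - EH α x S r N t
        = (∑ v ∈ Finset.Icc 1 t, (ETa α x S r N τ (v - 1) - EH α x S r N (v - 1)) * r v)
          + α * MH α x S r N t - α * GTa α x S r N τ (τ t))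
      ∧ ∀ s, s ≤ t → 0 ≤ ETa α x S r N τ s - EH α x S r N s := by
  intro t
  induction t with
  | zero =>
    have h1 : ETa α x S r N τ 0 = EH α x S r N 0 := rfl
    constructor
    · rw [hτ0, h1, MH_zero]
      have h3 : GTa α x S r N τ 0 = 0 := Gaux_zero S r N _
      rw [h3]
      simp
    · intro s hs
      have : s = 0 := by omega
      subst this
      rw [h1]; simp
  | succ t ih =>
    obtain ⟨hform, hpos⟩ := ih
    have hsum : ∑ v ∈ Finset.Icc 1 (t + 1),
          (ETa α x S r N τ (v - 1) - EH α x S r N (v - 1)) * r v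
        = (∑ v ∈ Finset.Icc 1 t, (ETa α x S r N τ (v - 1) - EH α x S r N (v - 1)) * r v)
          + (ETa α x S r N τ t - EH α x S r N t) * r (t + 1) := by
      rw [Finset.sum_Icc_succ_top (by omega : 1 ≤ t + 1)]
      simp
    have hform1 : ETa α x S r N τ (t + 1) - EH α x S r N (t + 1)
        = (∑ v ∈ Finset.Icc 1 (t + 1),
            (ETa α x S r N τ (v - 1) - EH α x S r N (v - 1)) * r v)
          + α * MH α x S r N (t + 1) - α * GTa α x S r N τ (τ (t + 1)) := by
      rw [ETa_succ α x S r N τ t (hτle _) (hτle _), EH_succ, hsum]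
      linear_combination hform
    refine ⟨hform1, ?_⟩
    intro s hs
    rcases le_or_gt s t with h | h
    · exact hpos s h
    · have : s = t + 1 := by omega
      subst this
      have hfull_nonneg : ∀ v ∈ Finset.Icc 1 (t + 1),
          0 ≤ (ETa α x S r N τ (v - 1) - EH α x S r N (v - 1)) * r v := by
        intro v hv
        rw [Finset.mem_Icc] at hv
        exact mul_nonneg (hpos (v - 1) (by omega)) (hr v)
      have hsub_nonneg : 0 ≤ ∑ v ∈ Finset.Icc 1 (τ (t + 1)),
          (ETa α x S r N τ (v - 1) - EH α x S r N (v - 1)) * r v := by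
        apply Finset.sum_nonneg
        intro v hv
        rw [Finset.mem_Icc] at hv
        have := hτle (t + 1)
        exact mul_nonneg (hpos (v - 1) (by omega)) (hr v)
      have hsub_le : (∑ v ∈ Finset.Icc 1 (τ (t + 1)),
            (ETa α x S r N τ (v - 1) - EH α x S r N (v - 1)) * r v)
          ≤ ∑ v ∈ Finset.Icc 1 (t + 1),
            (ETa α x S r N τ (v - 1) - EH α x S r N (v - 1)) * r v := by
        apply Finset.sum_le_sum_of_subset_of_nonneg
        · exact Finset.Icc_subset_Icc_right (hτle (t + 1))
        · intro v hv _
          exact hfull_nonneg v hv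
      have hGsub : GTa α x S r N τ (τ (t + 1)) - GH α x S r N (τ (t + 1))
          = ∑ v ∈ Finset.Icc 1 (τ (t + 1)),
            (ETa α x S r N τ (v - 1) - EH α x S r N (v - 1)) * r v :=
        Gaux_sub S r N (ETa α x S r N τ) (EH α x S r N) (τ (t + 1))
      have hMle : GH α x S r N (τ (t + 1)) ≤ MH α x S r N (t + 1) :=
        Finset.le_sup' _ (Finset.mem_range.mpr (by have := hτle (t + 1); omega))
      have hexp : α * GTa α x S r N τ (τ (t + 1))
          = α * GH α x S r N (τ (t + 1))
            + α * ∑ v ∈ Finset.Icc 1 (τ (t + 1)),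
              (ETa α x S r N τ (v - 1) - EH α x S r N (v - 1)) * r v := by
        linear_combination α * hGsub
      have hα_prod : 0 ≤ α * MH α x S r N (t + 1) - α * GH α x S r N (τ (t + 1)) := by
        nlinarith [hMle, hα0]
      have hαsub : α * (∑ v ∈ Finset.Icc 1 (τ (t + 1)),
            (ETa α x S r N τ (v - 1) - EH α x S r N (v - 1)) * r v)
          ≤ ∑ v ∈ Finset.Icc 1 (τ (t + 1)),
            (ETa α x S r N τ (v - 1) - EH α x S r N (v - 1)) * r v := by
        nlinarith [hsub_nonneg, hα1]
      have hfull_nonneg' : 0 ≤ ∑ v ∈ Finset.Icc 1 (t + 1),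
          (ETa α x S r N τ (v - 1) - EH α x S r N (v - 1)) * r v :=
        Finset.sum_nonneg hfull_nonneg
      linarith [hform1, hexp, hα_prod, hαsub, hsub_le]

private lemma key_eq (α x : ℝ) (S : ℕ → Fin d → ℝ) (r : ℕ → ℝ)
    (N : ℕ → ℕ → Fin d → ℝ) (τ : ℕ → ℕ) (T : ℕ)
    (hτle : ∀ t, τ t ≤ t)
    (hτG : ∀ t, t ≤ T → GH α x S r N (τ t) = MH α x S r N t) :
    ∀ t, t ≤ T → ∀ s, s ≤ t → ETa α x S r N τ s = EH α x S r N s := by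
  intro t
  induction t with
  | zero =>
    intro _ s hs
    have : s = 0 := by omega
    subst this; rfl
  | succ t ih =>
    intro ht s hs
    rcases le_or_gt s t with h | h
    · exact ih (by omega) s h
    · have : s = t + 1 := by omega
      subst this
      have hGT : ∀ u, u ≤ t + 1 → GTa α x S r N τ u = GH α x S r N u := by
        intro u hu
        exact Gaux_congr S r N u fun v hv => ih (by omega) v (by omega)
      rw [ETa_succ α x S r N τ t (hτle _) (hτle _), EH_succ,
        hGT (τ (t + 1)) (hτle _), hGT (τ t) (le_trans (hτle t) (by omega)),
        hτG (t + 1) ht, hτG t (by omega), ih (by omega) t le_rfl]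

private lemma tauArg_ex (α x : ℝ) (S : ℕ → Fin d → ℝ) (r : ℕ → ℝ)
    (N : ℕ → ℕ → Fin d → ℝ) (t : ℕ) :
    ∃ u, MH α x S r N t = GH α x S r N u := by
  obtain ⟨b, hb, hval⟩ :=
    Finset.exists_mem_eq_sup' (Finset.nonempty_range_add_one (n := t)) (GH α x S r N)
  exact ⟨b, hval⟩

/-- The first time at which the running maximum of realized gains is attained. -/
private def tauArg (α x : ℝ) (S : ℕ → Fin d → ℝ) (r : ℕ → ℝ)
    (N : ℕ → ℕ → Fin d → ℝ) (t : ℕ) : ℕ :=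
  Nat.find (tauArg_ex α x S r N t)

private lemma tauArg_spec (α x : ℝ) (S : ℕ → Fin d → ℝ) (r : ℕ → ℝ)
    (N : ℕ → ℕ → Fin d → ℝ) (t : ℕ) :
    MH α x S r N t = GH α x S r N (tauArg α x S r N t) :=
  Nat.find_spec (tauArg_ex α x S r N t)

private lemma tauArg_le (α x : ℝ) (S : ℕ → Fin d → ℝ) (r : ℕ → ℝ)
    (N : ℕ → ℕ → Fin d → ℝ) (t : ℕ) : tauArg α x S r N t ≤ t := by
  obtain ⟨b, hb, hval⟩ :=
    Finset.exists_mem_eq_sup' (Finset.nonempty_range_add_one (n := t)) (GH α x S r N)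
  rw [Finset.mem_range] at hb
  exact le_trans (Nat.find_min' (tauArg_ex α x S r N t) hval) (by omega)

private lemma tauArg_mono (α x : ℝ) (S : ℕ → Fin d → ℝ) (r : ℕ → ℝ)
    (N : ℕ → ℕ → Fin d → ℝ) {s t : ℕ} (hst : s ≤ t) :
    tauArg α x S r N s ≤ tauArg α x S r N t := by
  by_contra hcon
  push_neg at hcon
  have h1 : GH α x S r N (tauArg α x S r N t) ≤ MH α x S r N s :=
    Finset.le_sup' _ (Finset.mem_range.mpr
      (by have := tauArg_le α x S r N s; omega))
  have h2 : MH α x S r N s ≤ MH α x S r N t := MH_mono α x S r N hst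
  have h3 : MH α x S r N s = GH α x S r N (tauArg α x S r N t) :=
    le_antisymm (le_trans h2 (le_of_eq (tauArg_spec α x S r N t))) h1
  exact Nat.find_min (tauArg_ex α x S r N s) hcon h3

private lemma tauArg_idem (α x : ℝ) (S : ℕ → Fin d → ℝ) (r : ℕ → ℝ)
    (N : ℕ → ℕ → Fin d → ℝ) (t : ℕ) :
    tauArg α x S r N (tauArg α x S r N t) = tauArg α x S r N t := by
  have hMM : MH α x S r N (tauArg α x S r N t) = MH α x S r N t := by
    apply le_antisymm (MH_mono α x S r N (tauArg_le α x S r N t))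
    rw [tauArg_spec α x S r N t]
    exact Finset.le_sup' _ (Finset.mem_range.mpr (by omega))
  apply le_antisymm
  · exact Nat.find_min' _ (by rw [hMM]; exact tauArg_spec α x S r N t)
  · exact Nat.find_min' _ (by rw [← hMM]; exact tauArg_spec α x S r N (tauArg α x S r N t))

end TaxAux

section TaxMeas

variable {Ω : Type*} [m0 : MeasurableSpace Ω] {T d : ℕ}

private lemma meas_apply {m' : MeasurableSpace Ω} {f : Ω → Fin d → ℝ}
    (hf : Measurable[m'] f) (j : Fin d) : Measurable[m'] fun ω => f ω j :=
  (measurable_pi_apply j).comp hf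

private lemma meas_sup' {m' : MeasurableSpace Ω} (g : ℕ → Ω → ℝ) :
    ∀ u, (∀ v, v ≤ u → Measurable[m'] (g v)) →
    Measurable[m'] fun ω =>
      (Finset.range (u + 1)).sup' Finset.nonempty_range_add_one (fun v => g v ω) := by
  intro u
  induction u with
  | zero =>
    intro h
    have key : (fun ω => (Finset.range 1).sup' Finset.nonempty_range_add_one
        (fun v => g v ω)) = g 0 := by
      funext ω
      apply le_antisymm
      · apply Finset.sup'_le
        intro v hv
        rw [Finset.mem_range] at hv
        have : v = 0 := by omega
        subst this
        exact le_rfl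
      · exact Finset.le_sup' (fun v => g v ω) (Finset.mem_range.mpr (by omega : (0:ℕ) < 1))
    rw [key]
    exact h 0 le_rfl
  | succ u ih =>
    intro h
    have key : (fun ω => (Finset.range (u + 2)).sup' Finset.nonempty_range_add_one
          (fun v => g v ω))
        = fun ω => max ((Finset.range (u + 1)).sup' Finset.nonempty_range_add_one
            (fun v => g v ω)) (g (u + 1) ω) := by
      funext ω
      apply le_antisymm
      · apply Finset.sup'_le
        intro v hv
        rw [Finset.mem_range] at hv
        rcases le_or_gt v u with h' | h'
        · exact le_max_of_le_left
            (Finset.le_sup' (fun v => g v ω) (Finset.mem_range.mpr (by omega : v < u + 1)))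
        · have : v = u + 1 := by omega
          subst this
          exact le_max_right _ _
      · apply max_le
        · apply Finset.sup'_le
          intro v hv
          rw [Finset.mem_range] at hv
          exact Finset.le_sup' (fun v => g v ω) (Finset.mem_range.mpr (by omega : v < u + 2))
        · exact Finset.le_sup' (fun v => g v ω)
            (Finset.mem_range.mpr (by omega : u + 1 < u + 2))
    rw [key]
    exact Measurable.max (ih fun v hv => h v (by omega)) (h (u + 1) le_rfl)

private lemma meas_Gaux (M : Market Ω T d) {N : ℕ → ℕ → Ω → Fin d → ℝ}
    (hNm : ∀ i t, Measurable[M.F t] (N i t)) (e : ℕ → Ω → ℝ) (u t : ℕ) (hu : u ≤ t)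
    (he : ∀ v, v < u → Measurable[M.F t] (e v)) :
    Measurable[M.F t] fun ω =>
      Gaux (fun s => M.S s ω) (fun s => M.r s ω) (fun i s => N i s ω)
        (fun v => e v ω) u := by
  unfold Gaux dotp
  apply Finset.measurable_sum
  intro v hv
  rw [Finset.mem_Icc] at hv
  have hrv : Measurable[M.F t] (M.r v) :=
    (M.r_adapted v).mono (M.F_mono (by omega)) le_rfl
  have hSm : ∀ w, w ≤ t → ∀ j, Measurable[M.F t] fun ω => M.S w ω j :=
    fun w hw j => meas_apply ((M.S_adapted w).mono (M.F_mono hw) le_rfl) j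
  have hNm' : ∀ i w, w ≤ t → ∀ j, Measurable[M.F t] fun ω => N i w ω j :=
    fun i w hw j => meas_apply ((hNm i w).mono (M.F_mono hw) le_rfl) j
  apply Measurable.add
  · exact (he (v - 1) (by omega)).mul hrv
  · apply Finset.measurable_sum
    intro i hi
    rw [Finset.mem_range] at hi
    apply Finset.measurable_sum
    intro j _
    exact ((hNm' i (v - 1) (by omega) j).sub (hNm' i v (by omega) j)).mul
      ((hSm v (by omega) j).sub (hSm i (by omega) j))

private lemma meas_EH (M : Market Ω T d) {N : ℕ → ℕ → Ω → Fin d → ℝ}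
    (hNm : ∀ i t, Measurable[M.F t] (N i t)) (α x : ℝ) :
    ∀ t, Measurable[M.F t] fun ω =>
      EH α x (fun s => M.S s ω) (fun s => M.r s ω) (fun i s => N i s ω) t := by
  intro t
  induction t using Nat.strong_induction_on with
  | _ t ih =>
    match t with
    | 0 =>
      have hrw : (fun ω =>
          EH α x (fun s => M.S s ω) (fun s => M.r s ω) (fun i s => N i s ω) 0)
          = fun ω => x - ∑ j, N 0 0 ω j * M.S 0 ω j := rfl
      rw [hrw]
      exact measurable_const.sub (Finset.measurable_sum _ fun j _ =>
        (meas_apply (hNm 0 0) j).mul (meas_apply (M.S_adapted 0) j))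
    | (t + 1) =>
      have hE : ∀ w, w ≤ t → Measurable[M.F (t + 1)] fun ω =>
          EH α x (fun s => M.S s ω) (fun s => M.r s ω) (fun i s => N i s ω) w :=
        fun w hw => (ih w (by omega)).mono (M.F_mono (by omega)) le_rfl
      have hGH : ∀ v, v ≤ t + 1 → Measurable[M.F (t + 1)] fun ω =>
          GH α x (fun s => M.S s ω) (fun s => M.r s ω) (fun i s => N i s ω) v :=
        fun v hv => meas_Gaux M hNm
          (fun w ω => EH α x (fun s => M.S s ω) (fun s => M.r s ω)
            (fun i s => N i s ω) w) v (t + 1) hv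
          (fun w hw => hE w (by omega))
      have hMH : ∀ u, u ≤ t + 1 → Measurable[M.F (t + 1)] fun ω =>
          MH α x (fun s => M.S s ω) (fun s => M.r s ω) (fun i s => N i s ω) u := by
        intro u hu
        exact meas_sup' (fun v ω =>
          GH α x (fun s => M.S s ω) (fun s => M.r s ω) (fun i s => N i s ω) v) u
          (fun v hv => hGH v (by omega))
      have hrw : (fun ω =>
          EH α x (fun s => M.S s ω) (fun s => M.r s ω) (fun i s => N i s ω) (t + 1))
          = fun ω =>
            EH α x (fun s => M.S s ω) (fun s => M.r s ω) (fun i s => N i s ω) t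
            + M.r (t + 1) ω *
              EH α x (fun s => M.S s ω) (fun s => M.r s ω) (fun i s => N i s ω) t
            + (∑ j, ((∑ i ∈ Finset.range (t + 1), (N i t ω j - N i (t + 1) ω j))
                - N (t + 1) (t + 1) ω j) * M.S (t + 1) ω j)
            - (α * MH α x (fun s => M.S s ω) (fun s => M.r s ω)
                  (fun i s => N i s ω) (t + 1)
              - α * MH α x (fun s => M.S s ω) (fun s => M.r s ω)
                  (fun i s => N i s ω) t) := by
        funext ω
        rw [EH_succ]
        rfl
      rw [hrw]
      have hSm : ∀ j, Measurable[M.F (t + 1)] fun ω => M.S (t + 1) ω j :=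
        fun j => meas_apply (M.S_adapted (t + 1)) j
      have hNm' : ∀ i w, w ≤ t + 1 → ∀ j, Measurable[M.F (t + 1)] fun ω => N i w ω j :=
        fun i w hw j => meas_apply ((hNm i w).mono (M.F_mono hw) le_rfl) j
      apply Measurable.sub
      · apply Measurable.add
        · exact Measurable.add (hE t le_rfl) ((M.r_adapted (t + 1)).mul (hE t le_rfl))
        · apply Finset.measurable_sum
          intro j _
          exact (((Finset.measurable_sum _ fun i _ =>
            (hNm' i t (by omega) j).sub (hNm' i (t + 1) le_rfl j))).sub
            (hNm' (t + 1) (t + 1) le_rfl j)).mul (hSm j)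
      · exact ((measurable_const.mul (hMH (t + 1) le_rfl))).sub
          (measurable_const.mul (hMH t (by omega)))

private lemma meas_tauArg (M : Market Ω T d) {N : ℕ → ℕ → Ω → Fin d → ℝ}
    (hNm : ∀ i t, Measurable[M.F t] (N i t)) (α x : ℝ) (t : ℕ) :
    Measurable[M.F t] fun ω =>
      tauArg α x (fun s => M.S s ω) (fun s => M.r s ω) (fun i s => N i s ω) t := by
  have hGH : ∀ v, v ≤ t → Measurable[M.F t] fun ω =>
      GH α x (fun s => M.S s ω) (fun s => M.r s ω) (fun i s => N i s ω) v :=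
    fun v hv => meas_Gaux M hNm
      (fun w ω => EH α x (fun s => M.S s ω) (fun s => M.r s ω) (fun i s => N i s ω) w)
      v t hv (fun w hw => (meas_EH M hNm α x w).mono (M.F_mono (by omega)) le_rfl)
  have hMH : Measurable[M.F t] fun ω =>
      MH α x (fun s => M.S s ω) (fun s => M.r s ω) (fun i s => N i s ω) t :=
    meas_sup' (fun v ω =>
      GH α x (fun s => M.S s ω) (fun s => M.r s ω) (fun i s => N i s ω) v) t hGH
  refine @measurable_to_countable' ℕ Ω _ _ (M.F t) _ fun u => ?_
  by_cases hu : u ≤ t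
  · have hset : (fun ω => tauArg α x (fun s => M.S s ω) (fun s => M.r s ω)
          (fun i s => N i s ω) t) ⁻¹' {u}
        = {ω | MH α x (fun s => M.S s ω) (fun s => M.r s ω) (fun i s => N i s ω) t
            = GH α x (fun s => M.S s ω) (fun s => M.r s ω) (fun i s => N i s ω) u}
          ∩ ⋂ (v : ℕ) (_ : v < u),
            {ω | MH α x (fun s => M.S s ω) (fun s => M.r s ω) (fun i s => N i s ω) t
              = GH α x (fun s => M.S s ω) (fun s => M.r s ω) (fun i s => N i s ω) v}ᶜ := by
      ext ω
      simp only [Set.mem_preimage, Set.mem_singleton_iff, Set.mem_inter_iff,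
        Set.mem_iInter, Set.mem_setOf_eq, Set.mem_compl_iff]
      rw [tauArg, Nat.find_eq_iff]
    rw [hset]
    exact (measurableSet_eq_fun hMH (hGH u hu)).inter
      (MeasurableSet.iInter fun v => MeasurableSet.iInter fun hv =>
        (measurableSet_eq_fun hMH (hGH v (by omega))).compl)
  · have hset : (fun ω => tauArg α x (fun s => M.S s ω) (fun s => M.r s ω)
          (fun i s => N i s ω) t) ⁻¹' {u} = ∅ := by
      ext ω
      simp only [Set.mem_preimage, Set.mem_singleton_iff, Set.mem_empty_iff_false,
        iff_false]
      have := tauArg_le α x (fun s => M.S s ω) (fun s => M.r s ω) (fun i s => N i s ω) t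
      omega
    rw [hset]
    exact @MeasurableSet.empty Ω (M.F t)

end TaxMeas

/-- On a finite probability space, the after-tax terminal wealth under the
limited-use-of-losses rule is the minimum, over all artificial linear tax rules `τ`, of the
terminal bank account `η^{(τ)}_T(N)`. -/
theorem tax_wealth_eq_min_over_taxRules [Fintype Ω]
    (M : Market Ω T d) (α : ℝ) (hα0 : 0 ≤ α) (hα1 : α < 1)
    (x : ℝ) (N : ℕ → ℕ → Ω → Fin d → ℝ) (hN : M.IsStrategy N) :
    (∀ τ : ℕ → Ω → ℕ, M.IsTaxRule τ →
      ∀ᵐ ω ∂M.P, M.V α x N ω ≤ M.etaTauT α x N τ ω) ∧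
    (∃ τ : ℕ → Ω → ℕ, M.IsTaxRule τ ∧
      ∀ᵐ ω ∂M.P, M.V α x N ω = M.etaTauT α x N τ ω) := by
  obtain ⟨hNm, -⟩ := hN
  constructor
  · intro τ hτ
    refine Filter.Eventually.of_forall fun ω => ?_
    have h := (key_ineq α x (fun s => M.S s ω) (fun s => M.r s ω) (fun i s => N i s ω)
      hα0 hα1.le (fun s => M.r_nonneg s ω) (fun s => τ s ω) (hτ.1 ω)
      (fun s => hτ.2.2.1 s ω) T).2 T le_rfl
    have e1 : M.V α x N ω
        = EH α x (fun s => M.S s ω) (fun s => M.r s ω) (fun i s => N i s ω) T := rfl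
    have e2 : M.etaTauT α x N τ ω
        = ETa α x (fun s => M.S s ω) (fun s => M.r s ω) (fun i s => N i s ω)
            (fun s => τ s ω) T := rfl
    rw [e1, e2]
    linarith
  · refine ⟨fun t ω => tauArg α x (fun s => M.S s ω) (fun s => M.r s ω)
      (fun i s => N i s ω) (min t T), ⟨?_, ?_, ?_, ?_, ?_, ?_⟩, ?_⟩
    · intro ω
      beta_reduce
      have h := tauArg_le α x (fun s => M.S s ω) (fun s => M.r s ω)
        (fun i s => N i s ω) (min 0 T)
      omega
    · intro t
      exact (meas_tauArg M hNm α x (min t T)).mono (M.F_mono (min_le_left t T)) le_rfl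
    · intro t ω
      beta_reduce
      have h := tauArg_le α x (fun s => M.S s ω) (fun s => M.r s ω)
        (fun i s => N i s ω) (min t T)
      omega
    · intro t ω
      beta_reduce
      have h := tauArg_le α x (fun s => M.S s ω) (fun s => M.r s ω)
        (fun i s => N i s ω) (min t T)
      omega
    · intro s t hst ω
      exact tauArg_mono α x (fun u => M.S u ω) (fun u => M.r u ω) (fun i u => N i u ω)
        (by omega : min s T ≤ min t T)
    · intro t ω h1
      beta_reduce
      beta_reduce at h1
      have hle : tauArg α x (fun s => M.S s ω) (fun s => M.r s ω)
          (fun i s => N i s ω) (min t T) ≤ T :=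
        le_trans (tauArg_le α x (fun s => M.S s ω) (fun s => M.r s ω)
          (fun i s => N i s ω) (min t T)) (min_le_right t T)
      have hmin : min (tauArg α x (fun s => M.S s ω) (fun s => M.r s ω)
          (fun i s => N i s ω) (min t T)) T
          = tauArg α x (fun s => M.S s ω) (fun s => M.r s ω)
            (fun i s => N i s ω) (min t T) := by omega
      rw [hmin]
      exact tauArg_idem α x (fun s => M.S s ω) (fun s => M.r s ω)
        (fun i s => N i s ω) (min t T)
    · refine Filter.Eventually.of_forall fun ω => ?_
      have hG : ∀ t, t ≤ T →
          GH α x (fun s => M.S s ω) (fun s => M.r s ω) (fun i s => N i s ω)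
            (tauArg α x (fun s => M.S s ω) (fun s => M.r s ω)
              (fun i s => N i s ω) (min t T))
          = MH α x (fun s => M.S s ω) (fun s => M.r s ω) (fun i s => N i s ω) t := by
        intro t ht
        rw [min_eq_left ht]
        exact (tauArg_spec α x (fun s => M.S s ω) (fun s => M.r s ω)
          (fun i s => N i s ω) t).symm
      have h := key_eq α x (fun s => M.S s ω) (fun s => M.r s ω) (fun i s => N i s ω)
        (fun t => tauArg α x (fun s => M.S s ω) (fun s => M.r s ω)
          (fun i s => N i s ω) (min t T)) T
        (fun t => le_trans (tauArg_le α x (fun s => M.S s ω) (fun s => M.r s ω)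
          (fun i s => N i s ω) (min t T)) (min_le_left t T)) hG T le_rfl T le_rfl
      exact h.symm


end
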